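/- Let F be a cumulative distribution function on ℝ with F(0) = 0, and for k ≥ 1 define G_k(x) = ∫_{[0,x]} g_k(s,x) dF^{*k}(s), where g_k(s,x) = ((λ/c)^k/k!) e^{−((q+λ)/c)(s−x)}(s−x)^k. Then for all x ≥ 0 the right derivative satisfies ∂_+ G_k(x) = ∫_{[0,x]} ∂_x g_k(s,x) dF^{*k}(s). The left derivative differs from the right derivative at a point x_0 > 0 if and only if k = 1 and F has a jump at x_0, in which case ∂_− G_1(x_0) = ∫_{[0,x_0)} ∂_x g_1(s,x_0) dF(s). -/

import Mathlib

open MeasureTheory Filter Set Topology Metric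

/-- `W` is the `q`-scale function of a spectrally negative Lévy process with
Laplace exponent `ψ`: it vanishes on the negative half-line, is continuous on
`[0,∞)`, and its Laplace transform equals `1/(ψ(β) - q)` for `β > Φ(q)`. -/
def IsScaleFunction (ψ : ℝ → ℝ) (q : ℝ) (W : ℝ → ℝ) : Prop :=
  ContinuousOn W (Set.Ici 0) ∧ (∀ x < 0, W x = 0) ∧
    ∀ β : ℝ, sSup {y : ℝ | ψ y = q} < β →
      (∫ x in Set.Ioi (0 : ℝ), Real.exp (-β * x) * W x) = 1 / (ψ β - q)

/-- Laplace exponent of a spectrally negative compound Poisson process with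
drift `c`, intensity `lam` and jump distribution `Pm` (of the negative of the jumps). -/
noncomputable def cppExponent (c lam : ℝ) (Pm : Measure ℝ) (u : ℝ) : ℝ :=
  c * u + lam * ∫ s, (Real.exp (-u * s) - 1) ∂Pm

/-- `k`-fold convolution power of a measure on `ℝ`, with `convPow μ 0 = δ₀`. -/
noncomputable def convPow (μ : Measure ℝ) : ℕ → Measure ℝ
  | 0 => Measure.dirac 0
  | k + 1 => Measure.map (fun p : ℝ × ℝ => p.1 + p.2) ((convPow μ k).prod μ)

/-- The kernel `g_k(s,x) = ((λ/c)^k/k!) e^{-((q+λ)/c)(s-x)} (s-x)^k`. -/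
noncomputable def gker (q lam c : ℝ) (k : ℕ) (s x : ℝ) : ℝ :=
  ((lam / c) ^ k / Nat.factorial k) * Real.exp (-((q + lam) / c) * (s - x)) * (s - x) ^ k

/-- The `x`-derivative of the kernel `gker`. -/
noncomputable def gker' (q lam c : ℝ) (k : ℕ) (s x : ℝ) : ℝ :=
  ((lam / c) ^ k / Nat.factorial k) * Real.exp (-((q + lam) / c) * (s - x)) *
    (((q + lam) / c) * (s - x) ^ k - k * (s - x) ^ (k - 1))

lemma gker_hasDerivAt (q lam c : ℝ) (k : ℕ) (s x : ℝ) :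
    HasDerivAt (fun u => gker q lam c k s u) (gker' q lam c k s x) x := by
  set θ := (q + lam) / c with hθ
  have h1 : HasDerivAt (fun u : ℝ => s - u) (-1) x := (hasDerivAt_id x).const_sub s
  have hexp : HasDerivAt (fun u => Real.exp (-θ * (s - u))) (Real.exp (-θ * (s - x)) * θ) x := by
    have := (h1.const_mul (-θ)).exp
    convert this using 1
    ring
  have hpow : HasDerivAt (fun u => (s - u) ^ k) (-((k : ℝ) * (s - x) ^ (k - 1))) x := by
    have := (hasDerivAt_pow k (s - x)).comp x h1
    refine this.congr_deriv ?_
    ring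
  have H := (hexp.mul hpow).const_mul ((lam / c) ^ k / (Nat.factorial k : ℝ))
  have hfe : (fun u => gker q lam c k s u)
      = fun u => ((lam / c) ^ k / (Nat.factorial k : ℝ)) *
        (Real.exp (-θ * (s - u)) * (s - u) ^ k) := by
    funext u; simp [gker, mul_assoc, hθ]
  rw [hfe]
  refine H.congr_deriv ?_
  simp only [gker']
  ring

lemma gker_cont (q lam c : ℝ) (k : ℕ) (t : ℝ) :
    Continuous fun s => gker q lam c k s t := by unfold gker; fun_prop

lemma gker'_cont (q lam c : ℝ) (k : ℕ) (t : ℝ) :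
    Continuous fun s => gker' q lam c k s t := by unfold gker'; fun_prop

lemma gker'_cont2 (q lam c : ℝ) (k : ℕ) :
    Continuous fun p : ℝ × ℝ => gker' q lam c k p.1 p.2 := by unfold gker'; fun_prop

lemma convPow_isProb (μ : Measure ℝ) [IsProbabilityMeasure μ] :
    ∀ k, IsProbabilityMeasure (convPow μ k)
  | 0 => by rw [show convPow μ 0 = Measure.dirac 0 from rfl]; infer_instance
  | k + 1 => by
      haveI := convPow_isProb μ k
      rw [show convPow μ (k + 1)
        = Measure.map (fun p : ℝ × ℝ => p.1 + p.2) ((convPow μ k).prod μ) from rfl]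
      exact Measure.isProbabilityMeasure_map (by fun_prop)

lemma convPow_one (μ : Measure ℝ) [IsProbabilityMeasure μ] : convPow μ 1 = μ := by
  show Measure.map (fun p : ℝ × ℝ => p.1 + p.2) ((Measure.dirac 0).prod μ) = μ
  rw [Measure.dirac_prod, Measure.map_map (by fun_prop) measurable_prodMk_left]
  simp [Function.comp_def, Measure.map_id']

lemma tendsto_meas_Ioc (ν : Measure ℝ) [IsFiniteMeasure ν] (x : ℝ) :
    Tendsto (fun t => (ν (Ioc x t)).toReal) (𝓝[Ici x] x) (𝓝 0) := by
  rw [tendsto_order]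
  constructor
  · intro a ha
    exact Eventually.of_forall fun t => lt_of_lt_of_le ha ENNReal.toReal_nonneg
  · intro a ha
    have h0 : Tendsto (fun n : ℕ => ν (Ioc x (x + 1 / (n + 1)))) atTop
        (𝓝 (ν (⋂ n : ℕ, Ioc x (x + 1 / (n + 1))))) := by
      apply tendsto_measure_iInter_atTop
        (fun n => measurableSet_Ioc.nullMeasurableSet)
        (fun m n hmn => Ioc_subset_Ioc_right (by
          have hmn' : (m : ℝ) ≤ n := Nat.cast_le.2 hmn
          have : (1 : ℝ) / ((n : ℝ) + 1) ≤ 1 / ((m : ℝ) + 1) := by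
            apply one_div_le_one_div_of_le (by positivity)
            linarith
          linarith))
        ⟨0, measure_ne_top ν _⟩
    have hempty : (⋂ n : ℕ, Ioc x (x + 1 / (n + 1))) = (∅ : Set ℝ) := by
      ext y
      simp only [mem_iInter, mem_Ioc, mem_empty_iff_false, iff_false, not_forall]
      by_contra h
      push_neg at h
      obtain ⟨n, hn⟩ := exists_nat_one_div_lt (sub_pos.2 (h 0).1)
      have : (1 : ℝ) / (n + 1) < 1 / (n + 1) := by
        calc (1 : ℝ) / (n + 1) < y - x := hn
        _ ≤ 1 / (n + 1) := by linarith [(h n).2]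
      linarith
    rw [hempty, measure_empty] at h0
    have hev : ∀ᶠ n : ℕ in atTop, ν (Ioc x (x + 1 / (n + 1))) < ENNReal.ofReal a :=
      h0.eventually_lt_const (ENNReal.ofReal_pos.2 ha)
    obtain ⟨n, hn⟩ := hev.exists
    have hlt : ∀ᶠ t in 𝓝[Ici x] x, t < x + 1 / (n + 1) :=
      eventually_nhdsWithin_of_eventually_nhds (eventually_lt_nhds (by
        have : (0:ℝ) < 1 / ((n : ℝ) + 1) := by positivity
        linarith))
    filter_upwards [hlt] with t ht
    have : ν (Ioc x t) ≤ ν (Ioc x (x + 1 / (n + 1))) :=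
      measure_mono (Ioc_subset_Ioc_right ht.le)
    exact ENNReal.toReal_lt_of_lt_ofReal (lt_of_le_of_lt this hn)

lemma tendsto_meas_Ioo (ν : Measure ℝ) [IsFiniteMeasure ν] (x : ℝ) :
    Tendsto (fun t => (ν (Ioo t x)).toReal) (𝓝[Iic x] x) (𝓝 0) := by
  rw [tendsto_order]
  constructor
  · intro a ha
    exact Eventually.of_forall fun t => lt_of_lt_of_le ha ENNReal.toReal_nonneg
  · intro a ha
    have h0 : Tendsto (fun n : ℕ => ν (Ioo (x - 1 / (n + 1)) x)) atTop
        (𝓝 (ν (⋂ n : ℕ, Ioo (x - 1 / (n + 1)) x))) := by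
      apply tendsto_measure_iInter_atTop
        (fun n => measurableSet_Ioo.nullMeasurableSet)
        (fun m n hmn => Ioo_subset_Ioo_left (by
          have hmn' : (m : ℝ) ≤ n := Nat.cast_le.2 hmn
          have : (1 : ℝ) / ((n : ℝ) + 1) ≤ 1 / ((m : ℝ) + 1) := by
            apply one_div_le_one_div_of_le (by positivity)
            linarith
          linarith))
        ⟨0, measure_ne_top ν _⟩
    have hempty : (⋂ n : ℕ, Ioo (x - 1 / (n + 1)) x) = (∅ : Set ℝ) := by
      ext y
      simp only [mem_iInter, mem_Ioo, mem_empty_iff_false, iff_false, not_forall]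
      by_contra h
      push_neg at h
      obtain ⟨n, hn⟩ := exists_nat_one_div_lt (sub_pos.2 (h 0).2)
      have : (1 : ℝ) / (n + 1) < 1 / (n + 1) := by
        calc (1 : ℝ) / (n + 1) < x - y := hn
        _ ≤ 1 / (n + 1) := by linarith [(h n).1]
      linarith
    rw [hempty, measure_empty] at h0
    have hev : ∀ᶠ n : ℕ in atTop, ν (Ioo (x - 1 / (n + 1)) x) < ENNReal.ofReal a :=
      h0.eventually_lt_const (ENNReal.ofReal_pos.2 ha)
    obtain ⟨n, hn⟩ := hev.exists
    have hlt : ∀ᶠ t in 𝓝[Iic x] x, x - 1 / (n + 1) < t :=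
      eventually_nhdsWithin_of_eventually_nhds (eventually_gt_nhds (by
        have : (0:ℝ) < 1 / ((n : ℝ) + 1) := by positivity
        linarith))
    filter_upwards [hlt] with t ht
    have : ν (Ioo t x) ≤ ν (Ioo (x - 1/(n+1)) x) := measure_mono (Ioo_subset_Ioo_left ht.le)
    exact ENNReal.toReal_lt_of_lt_ofReal (lt_of_le_of_lt this hn)

lemma hasDerivAt_param (q lam c x : ℝ) (k : ℕ) (ν : Measure ℝ) [IsFiniteMeasure ν] :
    HasDerivAt (fun t => ∫ s in Icc (0:ℝ) x, gker q lam c k s t ∂ν)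
      (∫ s in Icc (0:ℝ) x, gker' q lam c k s x ∂ν) x := by
  obtain ⟨M, hM⟩ := (isCompact_Icc.prod (isCompact_Icc (a := x - 1) (b := x + 1))
    ).exists_bound_of_continuousOn (gker'_cont2 q lam c k).continuousOn
  have key := hasDerivAt_integral_of_dominated_loc_of_deriv_le
    (μ := ν.restrict (Icc (0:ℝ) x)) (F := fun t s => gker q lam c k s t)
    (F' := fun t s => gker' q lam c k s t) (x₀ := x) (bound := fun _ => M)
    (ball_mem_nhds x one_pos)
    (Eventually.of_forall fun t => (gker_cont q lam c k t).aestronglyMeasurable)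
    ((gker_cont q lam c k x).continuousOn.integrableOn_Icc)
    (gker'_cont q lam c k x).aestronglyMeasurable
    ?_ (integrable_const M)
    (Eventually.of_forall fun s t _ => gker_hasDerivAt q lam c k s t)
  · exact key.2
  · filter_upwards [ae_restrict_mem measurableSet_Icc] with s hs t ht
    have ht' : t ∈ Icc (x - 1) (x + 1) := by
      rw [Real.ball_eq_Ioo] at ht
      exact ⟨ht.1.le, ht.2.le⟩
    exact hM (s, t) ⟨hs, ht'⟩

lemma gker_bound (q lam c : ℝ) (hq : 0 ≤ q) (hlam : 0 < lam) (hc : 0 < c) (k : ℕ) (hk : 1 ≤ k)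
    {s t δ : ℝ} (h1 : |s - t| ≤ δ) (hδ : δ ≤ 1) :
    ‖gker q lam c k s t‖ ≤ |(lam / c) ^ k / (Nat.factorial k : ℝ)| *
      Real.exp ((q + lam) / c) * δ := by
  set θ := (q + lam) / c with hθdef
  have hθ : 0 ≤ θ := div_nonneg (by linarith) hc.le
  set A := |(lam / c) ^ k / (Nat.factorial k : ℝ)| with hA
  have hA0 : 0 ≤ A := abs_nonneg _
  have hδ0 : 0 ≤ δ := le_trans (abs_nonneg _) h1
  have hexp : Real.exp (-θ * (s - t)) ≤ Real.exp θ := by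
    apply Real.exp_le_exp.2
    calc -θ * (s - t) ≤ |(-θ) * (s - t)| := le_abs_self _
      _ = θ * |s - t| := by rw [abs_mul, abs_neg, abs_of_nonneg hθ]
      _ ≤ θ * 1 := mul_le_mul_of_nonneg_left (le_trans h1 hδ) hθ
      _ = θ := mul_one θ
  have hpow : |s - t| ^ k ≤ δ := by
    calc |s - t| ^ k ≤ δ ^ k := pow_le_pow_left₀ (abs_nonneg _) h1 k
      _ ≤ δ ^ 1 := pow_le_pow_of_le_one hδ0 hδ hk
      _ = δ := pow_one δ
  have heq : ‖gker q lam c k s t‖ = A * Real.exp (-θ * (s - t)) * |s - t| ^ k := by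
    rw [gker, Real.norm_eq_abs, abs_mul, abs_mul, abs_pow, Real.abs_exp]
  rw [heq]
  calc A * Real.exp (-θ * (s - t)) * |s - t| ^ k
      ≤ A * Real.exp θ * |s - t| ^ k :=
        mul_le_mul_of_nonneg_right (mul_le_mul_of_nonneg_left hexp hA0) (by positivity)
    _ ≤ A * Real.exp θ * δ := mul_le_mul_of_nonneg_left hpow (by positivity)

lemma remainder_right (q lam c : ℝ) (hq : 0 ≤ q) (hlam : 0 < lam) (hc : 0 < c) (k : ℕ)
    (hk : 1 ≤ k) (x : ℝ) (ν : Measure ℝ) [IsFiniteMeasure ν] :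
    HasDerivWithinAt (fun t => ∫ s in Ioc x t, gker q lam c k s t ∂ν) 0 (Ici x) x := by
  set C := |(lam / c) ^ k / (Nat.factorial k : ℝ)| * Real.exp ((q + lam) / c) with hC
  have hC0 : 0 ≤ C := by positivity
  rw [hasDerivWithinAt_iff_tendsto]
  have hRx : (∫ s in Ioc x x, gker q lam c k s x ∂ν) = 0 := by simp
  apply squeeze_zero' (g := fun t => C * (ν (Ioc x t)).toReal)
  · exact Eventually.of_forall fun t => by positivity
  · have hmem : ∀ᶠ t in 𝓝[Ici x] x, t ≤ x + 1 :=
      (eventually_nhdsWithin_of_eventually_nhds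
        (eventually_lt_nhds (lt_add_of_pos_right x one_pos))).mono fun t ht => ht.le
    filter_upwards [self_mem_nhdsWithin, hmem] with t ht ht1
    simp only [hRx, smul_zero, sub_zero]
    rcases eq_or_lt_of_le (mem_Ici.1 ht) with h | hxt
    · subst h
      simp [hRx]
    · have hb : ‖∫ s in Ioc x t, gker q lam c k s t ∂ν‖
          ≤ (C * (t - x)) * (ν (Ioc x t)).toReal := by
        apply norm_setIntegral_le_of_norm_le_const (measure_lt_top ν _)
        intro s hs
        have := gker_bound q lam c hq hlam hc k hk (s := s) (t := t) (δ := t - x)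
          (by rw [abs_le]; constructor <;> [linarith [hs.1]; linarith [hs.2]]) (by linarith)
        simpa [hC, mul_assoc] using this
      rw [Real.norm_eq_abs, abs_of_pos (sub_pos.2 hxt)]
      calc (t - x)⁻¹ * ‖∫ s in Ioc x t, gker q lam c k s t ∂ν‖
          ≤ (t - x)⁻¹ * ((C * (t - x)) * (ν (Ioc x t)).toReal) :=
            mul_le_mul_of_nonneg_left hb (inv_nonneg.2 (by linarith))
        _ = C * (ν (Ioc x t)).toReal := by
            have hne : t - x ≠ 0 := ne_of_gt (sub_pos.2 hxt)
            rw [show (t - x)⁻¹ * (C * (t - x) * (ν (Ioc x t)).toReal)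
              = ((t - x)⁻¹ * (t - x)) * (C * (ν (Ioc x t)).toReal) from by ring,
              inv_mul_cancel₀ hne, one_mul]
  · simpa using (tendsto_meas_Ioc ν x).const_mul C

lemma remainder_left (q lam c : ℝ) (hq : 0 ≤ q) (hlam : 0 < lam) (hc : 0 < c) (k : ℕ)
    (hk : 1 ≤ k) (x : ℝ) (ν : Measure ℝ) [IsFiniteMeasure ν] :
    HasDerivWithinAt (fun t => ∫ s in Ioo t x, gker q lam c k s t ∂ν) 0 (Iic x) x := by
  set C := |(lam / c) ^ k / (Nat.factorial k : ℝ)| * Real.exp ((q + lam) / c) with hC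
  have hC0 : 0 ≤ C := by positivity
  rw [hasDerivWithinAt_iff_tendsto]
  have hRx : (∫ s in Ioo x x, gker q lam c k s x ∂ν) = 0 := by simp
  apply squeeze_zero' (g := fun t => C * (ν (Ioo t x)).toReal)
  · exact Eventually.of_forall fun t => by positivity
  · have hmem : ∀ᶠ t in 𝓝[Iic x] x, x - 1 ≤ t :=
      (eventually_nhdsWithin_of_eventually_nhds
        (eventually_gt_nhds (by linarith : x - 1 < x))).mono fun t ht => ht.le
    filter_upwards [self_mem_nhdsWithin, hmem] with t ht ht1
    simp only [hRx, smul_zero, sub_zero]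
    have htle : t ≤ x := ht
    rcases eq_or_lt_of_le htle with h | htx
    · subst h
      simp [hRx]
    · have hb : ‖∫ s in Ioo t x, gker q lam c k s t ∂ν‖
          ≤ (C * (x - t)) * (ν (Ioo t x)).toReal := by
        apply norm_setIntegral_le_of_norm_le_const (measure_lt_top ν _)
        intro s hs
        have := gker_bound q lam c hq hlam hc k hk (s := s) (t := t) (δ := x - t)
          (by rw [abs_le]; constructor <;> [linarith [hs.1]; linarith [hs.2]]) (by linarith)
        simpa [hC, mul_assoc] using this
      rw [Real.norm_eq_abs, abs_of_neg (sub_neg.2 htx)]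
      calc (-(t - x))⁻¹ * ‖∫ s in Ioo t x, gker q lam c k s t ∂ν‖
          ≤ (-(t - x))⁻¹ * ((C * (x - t)) * (ν (Ioo t x)).toReal) := by
            apply mul_le_mul_of_nonneg_left hb
            rw [inv_nonneg]
            linarith
        _ = C * (ν (Ioo t x)).toReal := by
            have hne : x - t ≠ 0 := ne_of_gt (sub_pos.2 htx)
            rw [show -(t - x) = x - t by ring,
              show (x - t)⁻¹ * (C * (x - t) * (ν (Ioo t x)).toReal)
              = ((x - t)⁻¹ * (x - t)) * (C * (ν (Ioo t x)).toReal) from by ring,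
              inv_mul_cancel₀ hne, one_mul]
  · simpa using (tendsto_meas_Ioo ν x).const_mul C

lemma right_main (q lam c : ℝ) (hq : 0 ≤ q) (hlam : 0 < lam) (hc : 0 < c) (k : ℕ)
    (hk : 1 ≤ k) (x : ℝ) (hx : 0 ≤ x) (ν : Measure ℝ) [IsFiniteMeasure ν] :
    HasDerivWithinAt (fun t => ∫ s in Icc (0:ℝ) t, gker q lam c k s t ∂ν)
      (∫ s in Icc (0:ℝ) x, gker' q lam c k s x ∂ν) (Ici x) x := by
  have hint : ∀ (t a b : ℝ), IntegrableOn (fun s => gker q lam c k s t) (Icc a b) ν :=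
    fun t a b => (gker_cont q lam c k t).continuousOn.integrableOn_Icc
  have hB := hasDerivAt_param q lam c x k ν
  have hR := remainder_right q lam c hq hlam hc k hk x ν
  have hcomb : HasDerivWithinAt
      (fun t => (∫ s in Icc (0:ℝ) x, gker q lam c k s t ∂ν)
        + ∫ s in Ioc x t, gker q lam c k s t ∂ν)
      (∫ s in Icc (0:ℝ) x, gker' q lam c k s x ∂ν) (Ici x) x := by
    exact (hB.hasDerivWithinAt.add hR).congr_deriv (add_zero _)
  apply hcomb.congr_of_eventuallyEq
  · filter_upwards [self_mem_nhdsWithin] with t ht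
    have hxt : x ≤ t := ht
    have hd1 : Disjoint (Icc (0:ℝ) x) (Ioc x t) := by
      rw [Set.disjoint_left]
      rintro a ⟨_, h2⟩ ⟨h3, _⟩
      exact absurd h2 (not_le.2 h3)
    rw [← setIntegral_union hd1 measurableSet_Ioc (hint t 0 x)
      ((hint t x t).mono_set Ioc_subset_Icc_self), Icc_union_Ioc_eq_Icc hx hxt]
  · simp

lemma left_main (q lam c : ℝ) (hq : 0 ≤ q) (hlam : 0 < lam) (hc : 0 < c) (k : ℕ)
    (hk : 1 ≤ k) (x : ℝ) (hx : 0 < x) (ν : Measure ℝ) [IsFiniteMeasure ν] :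
    HasDerivWithinAt (fun t => ∫ s in Icc (0:ℝ) t, gker q lam c k s t ∂ν)
      (∫ s in Ico (0:ℝ) x, gker' q lam c k s x ∂ν) (Iic x) x := by
  have hint : ∀ (t a b : ℝ), IntegrableOn (fun s => gker q lam c k s t) (Icc a b) ν :=
    fun t a b => (gker_cont q lam c k t).continuousOn.integrableOn_Icc
  have hint' : IntegrableOn (fun s => gker' q lam c k s x) (Icc (0:ℝ) x) ν :=
    (gker'_cont q lam c k x).continuousOn.integrableOn_Icc
  have hsing : ∀ g : ℝ → ℝ, ∫ s in ({x} : Set ℝ), g s ∂ν = (ν {x}).toReal * g x := by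
    intro g
    rw [Measure.restrict_singleton, integral_smul_measure, integral_dirac]
    simp
  have hk0 : k ≠ 0 := Nat.one_le_iff_ne_zero.1 hk
  have hgxx : gker q lam c k x x = 0 := by
    simp [gker, zero_pow hk0]
  have hd4 : Disjoint (Ico (0:ℝ) x) ({x} : Set ℝ) := by
    simp [Set.disjoint_singleton_right]
  -- split the derivative integral
  have hsplit' : (∫ s in Icc (0:ℝ) x, gker' q lam c k s x ∂ν)
      = (∫ s in Ico (0:ℝ) x, gker' q lam c k s x ∂ν)
        + (ν {x}).toReal * gker' q lam c k x x := by
    rw [← hsing (fun s => gker' q lam c k s x), ← setIntegral_union hd4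
      (measurableSet_singleton x) (hint'.mono_set Ico_subset_Icc_self)
      (hint'.mono_set (singleton_subset_iff.2 ⟨hx.le, le_refl x⟩)),
      Ico_union_right hx.le]
  have hB := hasDerivAt_param q lam c x k ν
  have hB2 : HasDerivAt
      (fun t => (∫ s in Icc (0:ℝ) x, gker q lam c k s t ∂ν)
        - (ν {x}).toReal * gker q lam c k x t)
      (∫ s in Ico (0:ℝ) x, gker' q lam c k s x ∂ν) x := by
    have := hB.sub ((gker_hasDerivAt q lam c k x x).const_mul (ν {x}).toReal)
    refine this.congr_deriv ?_
    rw [hsplit']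
    ring
  have hR := remainder_left q lam c hq hlam hc k hk x ν
  have hcomb : HasDerivWithinAt
      (fun t => ((∫ s in Icc (0:ℝ) x, gker q lam c k s t ∂ν)
          - (ν {x}).toReal * gker q lam c k x t)
        - ∫ s in Ioo t x, gker q lam c k s t ∂ν)
      (∫ s in Ico (0:ℝ) x, gker' q lam c k s x ∂ν) (Iic x) x := by
    exact (hB2.hasDerivWithinAt.sub hR).congr_deriv (sub_zero _)
  apply hcomb.congr_of_eventuallyEq
  · have hpos : ∀ᶠ t in 𝓝[Iic x] x, 0 < t :=
      eventually_nhdsWithin_of_eventually_nhds (eventually_gt_nhds hx)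
    filter_upwards [self_mem_nhdsWithin, hpos] with t ht ht0
    have htle : t ≤ x := ht
    rcases eq_or_lt_of_le htle with h | htx
    · subst h
      simp [hgxx]
    · have hd2 : Disjoint (Icc (0:ℝ) t) (Ioc t x) := by
        rw [Set.disjoint_left]
        rintro a ⟨_, h2⟩ ⟨h3, _⟩
        exact absurd h2 (not_le.2 h3)
      have hd3 : Disjoint (Ioo t x) ({x} : Set ℝ) := by
        simp [Set.disjoint_singleton_right]
      have hs1 : (∫ s in Icc (0:ℝ) x, gker q lam c k s t ∂ν)
          = (∫ s in Icc (0:ℝ) t, gker q lam c k s t ∂ν)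
            + ∫ s in Ioc t x, gker q lam c k s t ∂ν := by
        rw [← setIntegral_union hd2 measurableSet_Ioc (hint t 0 t)
          ((hint t t x).mono_set Ioc_subset_Icc_self), Icc_union_Ioc_eq_Icc ht0.le htle]
      have hs2 : (∫ s in Ioc t x, gker q lam c k s t ∂ν)
          = (∫ s in Ioo t x, gker q lam c k s t ∂ν)
            + (ν {x}).toReal * gker q lam c k x t := by
        rw [← hsing (fun s => gker q lam c k s t), ← setIntegral_union hd3
          (measurableSet_singleton x) ((hint t t x).mono_set Ioo_subset_Icc_self)
          ((hint t t x).mono_set (singleton_subset_iff.2 ⟨htle, le_refl x⟩)),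
          Ioo_union_right htx]
      rw [hs1, hs2]
      ring
  · simp [hgxx]

/-- One-sided differentiability of `G_k(x) = ∫_{[0,x]} g_k(s,x) dF^{*k}(s)` where `F` is the
c.d.f. of the probability measure `μ` on `(0,∞)`: the right derivative is always
`∫_{[0,x]} ∂_x g_k(s,x) dF^{*k}(s)`; the left derivative coincides with it unless `k = 1`
and `F` jumps at the point, in which case the left derivative is
`∫_{[0,x)} ∂_x g_1(s,x) dF(s)`, and it differs from the right derivative. -/
theorem stieltjes_integral_one_sided_deriv (q lam c : ℝ) (hq : 0 ≤ q) (hlam : 0 < lam)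
    (hc : 0 < c) (μ : Measure ℝ) [IsProbabilityMeasure μ] (hsupp : μ (Set.Iio 0) = 0)
    (h0 : μ {(0 : ℝ)} = 0) :
    (∀ k : ℕ, 1 ≤ k → ∀ x : ℝ, 0 ≤ x →
      HasDerivWithinAt (fun t => ∫ s in Set.Icc (0 : ℝ) t, gker q lam c k s t ∂(convPow μ k))
        (∫ s in Set.Icc (0 : ℝ) x, deriv (fun u => gker q lam c k s u) x ∂(convPow μ k))
        (Set.Ici x) x) ∧
    (∀ k : ℕ, 1 ≤ k → ∀ x : ℝ, 0 < x → ¬(k = 1 ∧ μ {x} ≠ 0) →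
      HasDerivWithinAt (fun t => ∫ s in Set.Icc (0 : ℝ) t, gker q lam c k s t ∂(convPow μ k))
        (∫ s in Set.Icc (0 : ℝ) x, deriv (fun u => gker q lam c k s u) x ∂(convPow μ k))
        (Set.Iic x) x) ∧
    ∀ x : ℝ, 0 < x → μ {x} ≠ 0 →
      HasDerivWithinAt (fun t => ∫ s in Set.Icc (0 : ℝ) t, gker q lam c 1 s t ∂(convPow μ 1))
        (∫ s in Set.Ico (0 : ℝ) x, deriv (fun u => gker q lam c 1 s u) x ∂(convPow μ 1))
        (Set.Iic x) x ∧
      (∫ s in Set.Ico (0 : ℝ) x, deriv (fun u => gker q lam c 1 s u) x ∂(convPow μ 1)) ≠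
        (∫ s in Set.Icc (0 : ℝ) x, deriv (fun u => gker q lam c 1 s u) x ∂(convPow μ 1)) := by
  have hderiv : ∀ (k : ℕ) (s x : ℝ), deriv (fun u => gker q lam c k s u) x
      = gker' q lam c k s x := fun k s x => (gker_hasDerivAt q lam c k s x).deriv
  refine ⟨?_, ?_, ?_⟩
  · intro k hk x hx
    haveI := convPow_isProb μ k
    simp only [hderiv]
    exact right_main q lam c hq hlam hc k hk x hx (convPow μ k)
  · intro k hk x hx hcase
    haveI := convPow_isProb μ k
    simp only [hderiv]
    have hleft := left_main q lam c hq hlam hc k hk x hx (convPow μ k)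
    have heq : (∫ s in Ico (0:ℝ) x, gker' q lam c k s x ∂(convPow μ k))
        = ∫ s in Icc (0:ℝ) x, gker' q lam c k s x ∂(convPow μ k) := by
      have hint' : IntegrableOn (fun s => gker' q lam c k s x) (Icc (0:ℝ) x) (convPow μ k) :=
        (gker'_cont q lam c k x).continuousOn.integrableOn_Icc
      have hd4 : Disjoint (Ico (0:ℝ) x) ({x} : Set ℝ) := by
        simp [Set.disjoint_singleton_right]
      have hsing : (∫ s in ({x} : Set ℝ), gker' q lam c k s x ∂(convPow μ k))
          = ((convPow μ k) {x}).toReal * gker' q lam c k x x := by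
        rw [Measure.restrict_singleton, integral_smul_measure, integral_dirac]
        simp
      have hzero : ((convPow μ k) {x}).toReal * gker' q lam c k x x = 0 := by
        by_cases h1 : k = 1
        · subst h1
          have : μ {x} = 0 := by
            by_contra hne
            exact hcase ⟨rfl, hne⟩
          rw [convPow_one μ, this]
          simp
        · have hk2 : 2 ≤ k := by omega
          have : gker' q lam c k x x = 0 := by
            simp [gker', zero_pow (by omega : k ≠ 0), zero_pow (by omega : k - 1 ≠ 0)]
          rw [this, mul_zero]
      rw [← Ico_union_right hx.le, setIntegral_union hd4 (measurableSet_singleton x)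
        (hint'.mono_set Ico_subset_Icc_self)
        (hint'.mono_set (singleton_subset_iff.2 ⟨hx.le, le_refl x⟩)), hsing, hzero, add_zero]
    rw [← heq]
    exact hleft
  · intro x hx hatom
    haveI := convPow_isProb μ 1
    simp only [hderiv]
    constructor
    · exact left_main q lam c hq hlam hc 1 le_rfl x hx (convPow μ 1)
    · have hint' : IntegrableOn (fun s => gker' q lam c 1 s x) (Icc (0:ℝ) x) (convPow μ 1) :=
        (gker'_cont q lam c 1 x).continuousOn.integrableOn_Icc
      have hd4 : Disjoint (Ico (0:ℝ) x) ({x} : Set ℝ) := by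
        simp [Set.disjoint_singleton_right]
      have hsing : (∫ s in ({x} : Set ℝ), gker' q lam c 1 s x ∂(convPow μ 1))
          = ((convPow μ 1) {x}).toReal * gker' q lam c 1 x x := by
        rw [Measure.restrict_singleton, integral_smul_measure, integral_dirac]
        simp
      have hsplit : (∫ s in Icc (0:ℝ) x, gker' q lam c 1 s x ∂(convPow μ 1))
          = (∫ s in Ico (0:ℝ) x, gker' q lam c 1 s x ∂(convPow μ 1))
            + ((convPow μ 1) {x}).toReal * gker' q lam c 1 x x := by
        rw [← hsing, ← setIntegral_union hd4 (measurableSet_singleton x)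
          (hint'.mono_set Ico_subset_Icc_self)
          (hint'.mono_set (singleton_subset_iff.2 ⟨hx.le, le_refl x⟩)), Ico_union_right hx.le]
      have hval : gker' q lam c 1 x x = -(lam / c) := by
        simp [gker']
      have htoReal : ((convPow μ 1) {x}).toReal ≠ 0 := by
        rw [convPow_one μ]
        exact ENNReal.toReal_ne_zero.2 ⟨hatom, measure_ne_top μ _⟩
      intro hcontra
      rw [hsplit, hval] at hcontra
      have h2 : ((convPow μ 1) {x}).toReal * -(lam / c) = 0 := by linarith
      exact (mul_ne_zero htoReal (neg_ne_zero.2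
        (div_ne_zero hlam.ne' hc.ne'))) h2
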